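/- Let G be a finite directed graph without loops or 2-cycles and without isolated nodes. Then G is block-decomposable if and only if every connected component of G is block-decomposable. -/

import Mathlib

/-- The six block shapes: spike, triangle, infork, outfork, diamond, square. -/
inductive BlockShape : Type
  | spike | triangle | infork | outfork | diamond | square
  deriving DecidableEq

namespace BlockShape

/-- Number of nodes of each block shape. -/
def numNodes : BlockShape → ℕ
  | spike => 2
  | triangle => 3
  | infork => 3
  | outfork => 3
  | diamond => 4
  | square => 5

/-- The directed edges of each block shape.
For the spike the nodes are `x = 0, y = 1` with edge `x → y`.
For the triangle the nodes are `0, 1, 2` with edges `0 → 1 → 2 → 0`.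
For the infork the nodes are `x = 0, y = 1, c = 2` with edges `x → c`, `y → c`.
For the outfork the nodes are `x = 0, y = 1, c = 2` with edges `c → x`, `c → y`.
For the diamond the nodes are `p = 0, q = 1, x = 2, y = 3` with boundary edges
`p → x, x → q, q → y, y → p` and mid-edge `q → p`.
For the square the nodes are the center `c = 0` and corners `v1 = 1, …, v4 = 4`, with
edges `v1 → v2 → v3 → v4 → v1`, `c → v1`, `v2 → c`, `c → v3`, `v4 → c`. -/
def edges : (s : BlockShape) → List (Fin s.numNodes × Fin s.numNodes)
  | spike => ([(0, 1)] : List (Fin 2 × Fin 2))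
  | triangle => ([(0, 1), (1, 2), (2, 0)] : List (Fin 3 × Fin 3))
  | infork => ([(0, 2), (1, 2)] : List (Fin 3 × Fin 3))
  | outfork => ([(2, 0), (2, 1)] : List (Fin 3 × Fin 3))
  | diamond => ([(0, 2), (2, 1), (1, 3), (3, 0), (1, 0)] : List (Fin 4 × Fin 4))
  | square => ([(1, 2), (2, 3), (3, 4), (4, 1), (0, 1), (2, 0), (0, 3), (4, 0)] :
      List (Fin 5 × Fin 5))

/-- The outlets (white nodes) of each block shape. -/
def IsOutlet : (s : BlockShape) → Fin s.numNodes → Prop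
  | spike, _ => True
  | triangle, _ => True
  | infork, i => (i : ℕ) = 2
  | outfork, i => (i : ℕ) = 2
  | diamond, i => (i : ℕ) = 0 ∨ (i : ℕ) = 1
  | square, i => (i : ℕ) = 0

/-- The degree of a node inside its block (number of incident edges). -/
def blockDeg (s : BlockShape) (i : Fin s.numNodes) : ℕ :=
  s.edges.countP fun e => decide (e.1 = i) || decide (e.2 = i)

end BlockShape

/-- A directed multigraph on a vertex type `V` is given by its edge multiplicity
function `G : V → V → ℕ`.  It is a directed graph in our sense if it has no loops
and no 2-cycles. -/
def IsDiGraph {V : Type} (G : V → V → ℕ) : Prop :=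
  (∀ v, G v v = 0) ∧ ∀ x y, G x y = 0 ∨ G y x = 0

/-- Degree of a node: the number of incident edges counted with multiplicity. -/
def degree {V : Type} [Fintype V] (G : V → V → ℕ) (v : V) : ℕ :=
  ∑ w, (G v w + G w v)

/-- Two nodes are adjacent if some edge joins them (in either direction). -/
def Adj {V : Type} (G : V → V → ℕ) (x y : V) : Prop := 0 < G x y + G y x

/-- `Reach G x y` : `y` lies in the connected component of `x`. -/
def Reach {V : Type} (G : V → V → ℕ) : V → V → Prop := Relation.ReflTransGen (Adj G)

/-- The connected component of a node, as a finset. -/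
noncomputable def component {V : Type} [Fintype V] (G : V → V → ℕ) (v : V) : Finset V :=
  letI := Classical.decPred fun w => Reach G v w
  Finset.univ.filter (Reach G v)

/-- Total number of block edges mapped onto the ordered pair `(x, y)` by the gluing data. -/
def blockMult {V : Type} [DecidableEq V] (n : ℕ) (shape : Fin n → BlockShape)
    (emb : (b : Fin n) → Fin (shape b).numNodes → V) (x y : V) : ℕ :=
  ∑ b : Fin n, (shape b).edges.countP fun e => decide (emb b e.1 = x ∧ emb b e.2 = y)

/-- A block decomposition of the directed multigraph `G` : a finite collection of blocks
together with an identification of their nodes with the nodes of `G` such that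
* each block is embedded injectively,
* nodes of two distinct blocks may be identified only if both are outlets,
* each outlet is identified with at most one other outlet (no vertex lies in three blocks),
* every vertex of `G` comes from some block, and
* the multiplicity of each edge of `G` is the number of block edges giving it minus the
  number of block edges giving the reversed edge (two parallel edges with the same
  direction are kept as a double edge; two parallel edges with opposite directions
  annihilate each other). -/
structure BlockDecomposition {V : Type} [Fintype V] [DecidableEq V] (G : V → V → ℕ) :
    Type where
  n : ℕ
  shape : Fin n → BlockShape
  emb : (b : Fin n) → Fin (shape b).numNodes → V
  emb_inj : ∀ b, Function.Injective (emb b)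
  glue_outlets : ∀ (b c : Fin n) (i : Fin (shape b).numNodes) (j : Fin (shape c).numNodes),
    emb b i = emb c j → b ≠ c → (shape b).IsOutlet i ∧ (shape c).IsOutlet j
  atMostTwo : ∀ (b c d : Fin n) (i : Fin (shape b).numNodes) (j : Fin (shape c).numNodes)
    (k : Fin (shape d).numNodes), emb b i = emb c j → emb b i = emb d k →
    b = c ∨ b = d ∨ c = d
  covers : ∀ v : V, ∃ b i, emb b i = v
  edge_eq : ∀ x y : V, G x y = blockMult n shape emb x y - blockMult n shape emb y x

/-- The number of block edges of a decomposition lying over the ordered pair `(x, y)`. -/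
def BlockDecomposition.mult {V : Type} [Fintype V] [DecidableEq V] {G : V → V → ℕ}
    (D : BlockDecomposition G) : V → V → ℕ :=
  blockMult D.n D.shape D.emb

/-- A graph is (block-)decomposable if it admits a block decomposition. -/
def Decomposable {V : Type} [Fintype V] [DecidableEq V] (G : V → V → ℕ) : Prop :=
  Nonempty (BlockDecomposition G)

/-- The edge `e` of block `b` is annihilated in the decomposition `D` : some edge of
another block lies over the same pair of vertices with the opposite direction. -/
def BlockDecomposition.EdgeAnnihilated {V : Type} [Fintype V] [DecidableEq V]
    {G : V → V → ℕ} (D : BlockDecomposition G) (b : Fin D.n)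
    (e : Fin (D.shape b).numNodes × Fin (D.shape b).numNodes) : Prop :=
  e ∈ (D.shape b).edges ∧
    ∃ (c : Fin D.n) (f : Fin (D.shape c).numNodes × Fin (D.shape c).numNodes),
      c ≠ b ∧ f ∈ (D.shape c).edges ∧ D.emb c f.1 = D.emb b e.2 ∧ D.emb c f.2 = D.emb b e.1
namespace BDAux

open BlockShape

instance decOutlet : ∀ (s : BlockShape) (i : Fin s.numNodes), Decidable (s.IsOutlet i) := by
  intro s i; cases s <;> unfold BlockShape.IsOutlet <;> infer_instance

lemma numNodes_pos (s : BlockShape) : 0 < s.numNodes := by cases s <;> decide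

lemma edge_ne (s : BlockShape) : ∀ e ∈ s.edges, e.1 ≠ e.2 := by cases s <;> decide

lemma no_rev (s : BlockShape) (i j : Fin s.numNodes) (h1 : (i,j) ∈ s.edges)
    (h2 : (j,i) ∈ s.edges) : False := by
  revert i j; cases s <;> decide

lemma outlet_edge_cases (s : BlockShape) (i j : Fin s.numNodes) (h : (i,j) ∈ s.edges)
    (h1 : s.IsOutlet i) (h2 : s.IsOutlet j) :
    s = spike ∨ s = triangle ∨ s = diamond := by
  revert i j; cases s <;> simp <;> decide

lemma spike_edges (s : BlockShape) (hs : s = spike) :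
    ∀ e ∈ s.edges, s.edges = [e] := by subst hs; decide

lemma tri_char (s : BlockShape) (hs : s = triangle) :
    ∀ e ∈ s.edges, ∃ k : Fin s.numNodes, e.1 ≠ e.2 ∧ k ≠ e.1 ∧ k ≠ e.2 ∧
      s.edges.Perm [(e.1, e.2), (e.2, k), (k, e.1)] ∧
      (∀ m : Fin s.numNodes, m = e.1 ∨ m = e.2 ∨ m = k) := by
  subst hs; decide

lemma diamond_edge (s : BlockShape) (hs : s = diamond) (i j : Fin s.numNodes)
    (h : (i,j) ∈ s.edges) (h1 : s.IsOutlet i) (h2 : s.IsOutlet j) :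
    (i : ℕ) = 1 ∧ (j : ℕ) = 0 := by
  subst hs; revert i j; decide

lemma mem_edges_val (s : BlockShape) (i j : Fin s.numNodes)
    (h : ((i:ℕ), (j:ℕ)) ∈ s.edges.map (fun e => ((e.1:ℕ), (e.2:ℕ)))) : (i,j) ∈ s.edges := by
  revert i j; cases s <;> decide

lemma not_outlet_diamond (s : BlockShape) (hs : s = diamond) (i : Fin s.numNodes)
    (h : (i:ℕ) = 2 ∨ (i:ℕ) = 3) : ¬ s.IsOutlet i := by
  subst hs; revert i; decide

lemma shape_conn (s : BlockShape) (R : Fin s.numNodes → Fin s.numNodes → Prop)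
    (hrefl : ∀ i, R i i) (hsymm : ∀ i j, R i j → R j i)
    (htrans : ∀ i j k, R i j → R j k → R i k)
    (hedge : ∀ p q, (p, q) ∈ s.edges → R p q) : ∀ i j, R i j := by
  suffices h : ∀ i, R ⟨0, numNodes_pos s⟩ i by
    intro i j; exact htrans _ _ _ (hsymm _ _ (h i)) (h j)
  intro i
  cases s
  case spike =>
    fin_cases i
    · exact hrefl _
    · exact hedge _ _ (by decide)
  case triangle =>
    fin_cases i
    · exact hrefl _
    · exact hedge _ _ (by decide)
    · exact htrans _ (1 : Fin 3) _ (hedge _ _ (by decide)) (hedge _ _ (by decide))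
  case infork =>
    fin_cases i
    · exact hrefl _
    · exact htrans _ (2 : Fin 3) _ (hedge _ _ (by decide)) (hsymm _ _ (hedge _ _ (by decide)))
    · exact hedge _ _ (by decide)
  case outfork =>
    fin_cases i
    · exact hrefl _
    · exact htrans _ (2 : Fin 3) _ (hsymm _ _ (hedge _ _ (by decide))) (hedge _ _ (by decide))
    · exact hsymm _ _ (hedge _ _ (by decide))
  case diamond =>
    fin_cases i
    · exact hrefl _
    · exact htrans _ (2 : Fin 4) _ (hedge _ _ (by decide)) (hedge _ _ (by decide))
    · exact hedge _ _ (by decide)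
    · exact hsymm _ _ (hedge _ _ (by decide))
  case square =>
    fin_cases i
    · exact hrefl _
    · exact hedge _ _ (by decide)
    · exact hsymm _ _ (hedge _ _ (by decide))
    · exact hedge _ _ (by decide)
    · exact hsymm _ _ (hedge _ _ (by decide))

end BDAux

set_option linter.unusedSectionVars false

namespace BDAux

open BlockShape

lemma mem_edges_val' (s t : BlockShape) (hst : s = t) (i j : Fin s.numNodes)
    (h : ((i:ℕ), (j:ℕ)) ∈ t.edges.map (fun e => ((e.1:ℕ), (e.2:ℕ)))) : (i,j) ∈ s.edges := by
  subst hst; exact mem_edges_val s i j h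

variable {V : Type} [Fintype V] [DecidableEq V] {G : V → V → ℕ}

lemma adj_symm : Symmetric (Adj G) := fun x y h => by unfold Adj at *; omega

lemma reach_symm {x y : V} (h : Reach G x y) : Reach G y x :=
  by haveI : Std.Symm (Adj G) := ⟨fun _ _ h' => adj_symm h'⟩; exact (Relation.ReflTransGen.symmetric (r := Adj G)).symm _ _ h

lemma reach_trans {x y z : V} (h1 : Reach G x y) (h2 : Reach G y z) : Reach G x z :=
  Relation.ReflTransGen.trans h1 h2

lemma adj_reach {x y : V} (h : Adj G x y) : Reach G x y :=
  Relation.ReflTransGen.single h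

lemma mem_component_iff {v w : V} : w ∈ component G v ↔ Reach G v w := by
  classical
  simp [component, Finset.mem_filter]

variable (D : BlockDecomposition G)

lemma mult_def (x y : V) : D.mult x y =
    ∑ b : Fin D.n, ((D.shape b).edges.countP
      fun e => decide (D.emb b e.1 = x ∧ D.emb b e.2 = y)) := rfl

lemma mult_pos {b : Fin D.n} {e : Fin (D.shape b).numNodes × Fin (D.shape b).numNodes}
    (he : e ∈ (D.shape b).edges) {x y : V}
    (h1 : D.emb b e.1 = x) (h2 : D.emb b e.2 = y) : 0 < D.mult x y := by
  have h : 0 < ((D.shape b).edges.countP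
      fun e => decide (D.emb b e.1 = x ∧ D.emb b e.2 = y)) :=
    List.countP_pos_iff.mpr ⟨e, he, by simp [h1, h2]⟩
  calc 0 < _ := h
    _ ≤ D.mult x y := by
        rw [mult_def]
        exact Finset.single_le_sum
          (f := fun b => ((D.shape b).edges.countP
            fun e => decide (D.emb b e.1 = x ∧ D.emb b e.2 = y)))
          (fun _ _ => Nat.zero_le _) (Finset.mem_univ b)

lemma mult_eq_zero {x y : V}
    (h : ∀ b (e : Fin (D.shape b).numNodes × Fin (D.shape b).numNodes),
      e ∈ (D.shape b).edges → D.emb b e.1 = x → D.emb b e.2 = y → False) :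
    D.mult x y = 0 := by
  rw [mult_def]
  exact Finset.sum_eq_zero fun b _ => List.countP_eq_zero.mpr (fun e he hp => by
    simp only [decide_eq_true_eq] at hp; exact h b e he hp.1 hp.2)

lemma exists_of_mult_pos {x y : V} (h : 0 < D.mult x y) :
    ∃ b : Fin D.n, ∃ e : Fin (D.shape b).numNodes × Fin (D.shape b).numNodes,
      e ∈ (D.shape b).edges ∧ D.emb b e.1 = x ∧ D.emb b e.2 = y := by
  by_contra hc
  push_neg at hc
  rw [mult_eq_zero D (fun b e he h1 h2 => hc b e he h1 h2)] at h
  exact absurd h (by omega)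

lemma onlyTwo {b c d : Fin D.n} {i : Fin (D.shape b).numNodes}
    {j : Fin (D.shape c).numNodes} {k : Fin (D.shape d).numNodes} (hbc : b ≠ c)
    (h1 : D.emb b i = D.emb c j) (h2 : D.emb b i = D.emb d k) : b = d ∨ c = d := by
  rcases D.atMostTwo b c d i j k h1 h2 with h | h | h
  · exact absurd h hbc
  · exact Or.inl h
  · exact Or.inr h

lemma mult_two {x w : V} {b c : Fin D.n} (hbc : b ≠ c)
    (h : ∀ d (g : Fin (D.shape d).numNodes × Fin (D.shape d).numNodes),
      g ∈ (D.shape d).edges → D.emb d g.1 = x → D.emb d g.2 = w → b = d ∨ c = d) :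
    D.mult x w =
      ((D.shape b).edges.countP fun e => decide (D.emb b e.1 = x ∧ D.emb b e.2 = w))
      + ((D.shape c).edges.countP fun e => decide (D.emb c e.1 = x ∧ D.emb c e.2 = w)) := by
  have hsub := Finset.sum_subset (s₁ := ({b, c} : Finset (Fin D.n)))
    (f := fun d => ((D.shape d).edges.countP
      fun e => decide (D.emb d e.1 = x ∧ D.emb d e.2 = w)))
    (Finset.subset_univ _)
    (fun d _ hd => List.countP_eq_zero.mpr fun g hg hp => by
      simp only [decide_eq_true_eq] at hp
      simp only [Finset.mem_insert, Finset.mem_singleton, not_or] at hd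
      rcases h d g hg hp.1 hp.2 with h' | h'
      · exact hd.1 h'.symm
      · exact hd.2 h'.symm)
  rw [mult_def, ← hsub, Finset.sum_pair hbc]

lemma adj_of_oneside {x y : V} (hpos : 0 < D.mult x y) (hzero : D.mult y x = 0) :
    Adj G x y := by
  have h1 := D.edge_eq x y
  have h2 : D.mult x y = blockMult D.n D.shape D.emb x y := rfl
  have h3 : D.mult y x = blockMult D.n D.shape D.emb y x := rfl
  rw [← h2, ← h3] at h1
  unfold Adj
  omega

lemma dead_adj {b : Fin D.n} {e : Fin (D.shape b).numNodes × Fin (D.shape b).numNodes}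
    (he : e ∈ (D.shape b).edges)
    (hd : ¬ (D.shape b).IsOutlet e.1 ∨ ¬ (D.shape b).IsOutlet e.2) :
    Adj G (D.emb b e.1) (D.emb b e.2) := by
  apply adj_of_oneside D (mult_pos D he rfl rfl)
  apply mult_eq_zero
  intro c f hf h1 h2
  by_cases hcb : c = b
  · subst hcb
    have h1' : f.1 = e.2 := D.emb_inj c h1
    have h2' : f.2 = e.1 := D.emb_inj c h2
    have hfe : f = (e.2, e.1) := Prod.ext h1' h2'
    rw [hfe] at hf
    exact no_rev _ e.1 e.2 (by rwa [Prod.mk.eta]) hf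
  · have o1 := D.glue_outlets c b f.1 e.2 h1 hcb
    have o2 := D.glue_outlets c b f.2 e.1 h2 hcb
    rcases hd with hd | hd
    · exact hd o2.2
    · exact hd o1.2

lemma diamond_reach {b : Fin D.n} (hsb : D.shape b = diamond)
    (i j : Fin (D.shape b).numNodes) (hi : (i:ℕ) = 1) (hj : (j:ℕ) = 0) :
    Reach G (D.emb b i) (D.emb b j) := by
  have h4 : (D.shape b).numNodes = 4 := by rw [hsb]; rfl
  have e1 : (i, (⟨3, by omega⟩ : Fin (D.shape b).numNodes)) ∈ (D.shape b).edges := by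
    apply mem_edges_val' _ _ hsb
    simp [BlockShape.edges, Prod.ext_iff, hi]
    decide
  have e2 : ((⟨3, by omega⟩ : Fin (D.shape b).numNodes), j) ∈ (D.shape b).edges := by
    apply mem_edges_val' _ _ hsb
    simp [BlockShape.edges, Prod.ext_iff, hj]
    decide
  have A1 : Adj G (D.emb b i) (D.emb b ⟨3, by omega⟩) :=
    dead_adj D (e := (i, ⟨3, by omega⟩)) e1
      (Or.inr (not_outlet_diamond _ hsb _ (Or.inr rfl)))
  have A2 : Adj G (D.emb b ⟨3, by omega⟩) (D.emb b j) :=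
    dead_adj D (e := (⟨3, by omega⟩, j)) e2
      (Or.inl (not_outlet_diamond _ hsb _ (Or.inr rfl)))
  exact reach_trans (adj_reach A1) (adj_reach A2)

end BDAux

namespace BDAux

open BlockShape

variable {V : Type} [Fintype V] [DecidableEq V] {G : V → V → ℕ}
variable (D : BlockDecomposition G)

lemma case_ss (hiso : ∀ v : V, degree G v ≠ 0)
    {b c : Fin D.n} {e : Fin (D.shape b).numNodes × Fin (D.shape b).numNodes}
    {f : Fin (D.shape c).numNodes × Fin (D.shape c).numNodes}
    (hbc : b ≠ c) (he : e ∈ (D.shape b).edges) (hf : f ∈ (D.shape c).edges)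
    (hf1 : D.emb c f.1 = D.emb b e.2) (hf2 : D.emb c f.2 = D.emb b e.1)
    (hsb : D.shape b = spike) (hsc : D.shape c = spike) : False := by
  have hEb := spike_edges _ hsb e he
  have hEc := spike_edges _ hsc f hf
  have hxy : D.emb b e.1 ≠ D.emb b e.2 := fun h => edge_ne _ e he (D.emb_inj b h)
  apply hiso (D.emb b e.1)
  apply Finset.sum_eq_zero
  intro w _
  have key : D.mult (D.emb b e.1) w = D.mult w (D.emb b e.1) := by
    rw [mult_two D hbc (fun d g hg h1 h2 => onlyTwo D hbc hf2.symm h1.symm),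
        mult_two D hbc (fun d g hg h1 h2 => onlyTwo D hbc hf2.symm h2.symm),
        hEb, hEc]
    simp only [List.countP_cons, List.countP_nil, decide_eq_true_eq, Nat.zero_add]
    simp only [hf1, hf2]
    simp [hxy, Ne.symm hxy]
    all_goals (split_ifs <;> omega)
  have e1 := D.edge_eq (D.emb b e.1) w
  have e2 := D.edge_eq w (D.emb b e.1)
  rw [show blockMult D.n D.shape D.emb (D.emb b e.1) w = D.mult (D.emb b e.1) w from rfl,
      show blockMult D.n D.shape D.emb w (D.emb b e.1) = D.mult w (D.emb b e.1) from rfl] at e1 e2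
  omega

lemma case_st {b c : Fin D.n} {e : Fin (D.shape b).numNodes × Fin (D.shape b).numNodes}
    {f : Fin (D.shape c).numNodes × Fin (D.shape c).numNodes}
    (hbc : b ≠ c) (he : e ∈ (D.shape b).edges) (hf : f ∈ (D.shape c).edges)
    (hf1 : D.emb c f.1 = D.emb b e.2) (hf2 : D.emb c f.2 = D.emb b e.1)
    (hsb : D.shape b = spike) (hsc : D.shape c = triangle) :
    Reach G (D.emb b e.1) (D.emb b e.2) := by
  have hEb := spike_edges _ hsb e he
  obtain ⟨k, hne, hk1, hk2, hperm, hall⟩ := tri_char _ hsc f hf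
  have hux : D.emb c k ≠ D.emb b e.1 := fun h => hk2 (D.emb_inj c (h.trans hf2.symm))
  have huy : D.emb c k ≠ D.emb b e.2 := fun h => hk1 (D.emb_inj c (h.trans hf1.symm))
  have m1 : 0 < D.mult (D.emb b e.1) (D.emb c k) :=
    mult_pos D (b := c) (e := (f.2, k)) (hperm.mem_iff.mpr (by simp)) hf2 rfl
  have m2 : D.mult (D.emb c k) (D.emb b e.1) = 0 := by
    apply mult_eq_zero
    intro d g hg h1 h2
    rcases onlyTwo D hbc hf2.symm h2.symm with rfl | rfl
    · rw [hEb] at hg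
      simp only [List.mem_singleton] at hg
      subst hg
      exact hux h1.symm
    · have g1 : g.1 = k := D.emb_inj c h1
      have g2 : g.2 = f.2 := D.emb_inj c (h2.trans hf2.symm)
      have hg' := hperm.mem_iff.mp hg
      rw [show g = (k, f.2) from Prod.ext g1 g2] at hg'
      simp only [List.mem_cons, List.not_mem_nil, or_false, Prod.mk.injEq] at hg'
      rcases hg' with ⟨h', _⟩ | ⟨h', _⟩ | ⟨_, h'⟩
      · exact hk1 h'
      · exact hk2 h'
      · exact hne h'.symm
  have A1 : Adj G (D.emb b e.1) (D.emb c k) := adj_of_oneside D m1 m2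
  have m3 : 0 < D.mult (D.emb c k) (D.emb b e.2) :=
    mult_pos D (b := c) (e := (k, f.1)) (hperm.mem_iff.mpr (by simp)) rfl hf1
  have m4 : D.mult (D.emb b e.2) (D.emb c k) = 0 := by
    apply mult_eq_zero
    intro d g hg h1 h2
    rcases onlyTwo D hbc hf1.symm h1.symm with rfl | rfl
    · rw [hEb] at hg
      simp only [List.mem_singleton] at hg
      subst hg
      exact huy h2.symm
    · have g1 : g.1 = f.1 := D.emb_inj c (h1.trans hf1.symm)
      have g2 : g.2 = k := D.emb_inj c h2
      have hg' := hperm.mem_iff.mp hg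
      rw [show g = (f.1, k) from Prod.ext g1 g2] at hg'
      simp only [List.mem_cons, List.not_mem_nil, or_false, Prod.mk.injEq] at hg'
      rcases hg' with ⟨_, h'⟩ | ⟨h', _⟩ | ⟨h', _⟩
      · exact hk2 h'
      · exact hne h'
      · exact hk1 h'.symm
  have A2 : Adj G (D.emb c k) (D.emb b e.2) := adj_of_oneside D m3 m4
  exact reach_trans (adj_reach A1) (adj_reach A2)

lemma case_tt (hiso : ∀ v : V, degree G v ≠ 0)
    {b c : Fin D.n} {e : Fin (D.shape b).numNodes × Fin (D.shape b).numNodes}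
    {f : Fin (D.shape c).numNodes × Fin (D.shape c).numNodes}
    (hbc : b ≠ c) (he : e ∈ (D.shape b).edges) (hf : f ∈ (D.shape c).edges)
    (hf1 : D.emb c f.1 = D.emb b e.2) (hf2 : D.emb c f.2 = D.emb b e.1)
    (hsb : D.shape b = triangle) (hsc : D.shape c = triangle) :
    Reach G (D.emb b e.1) (D.emb b e.2) := by
  obtain ⟨z, bne, bz1, bz2, bperm, ball⟩ := tri_char _ hsb e he
  obtain ⟨k, cne, ck1, ck2, cperm, call⟩ := tri_char _ hsc f hf
  have hzx : D.emb b z ≠ D.emb b e.1 := fun h => bz1 (D.emb_inj b h)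
  have hzy : D.emb b z ≠ D.emb b e.2 := fun h => bz2 (D.emb_inj b h)
  have hxy : D.emb b e.1 ≠ D.emb b e.2 := fun h => bne (D.emb_inj b h)
  by_cases hzu : D.emb b z = D.emb c k
  · exfalso
    apply hiso (D.emb b e.1)
    apply Finset.sum_eq_zero
    intro w _
    have key : D.mult (D.emb b e.1) w = D.mult w (D.emb b e.1) := by
      rw [mult_two D hbc (fun d g hg h1 h2 => onlyTwo D hbc hf2.symm h1.symm),
          mult_two D hbc (fun d g hg h1 h2 => onlyTwo D hbc hf2.symm h2.symm),
          bperm.countP_eq, bperm.countP_eq, cperm.countP_eq, cperm.countP_eq]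
      simp only [List.countP_cons, List.countP_nil, decide_eq_true_eq, Nat.zero_add]
      simp only [hf1, hf2, ← hzu]
      simp [hxy, Ne.symm hxy, hzx, Ne.symm hzx, hzy, Ne.symm hzy]
      all_goals (split_ifs <;> omega)
    have e1 := D.edge_eq (D.emb b e.1) w
    have e2 := D.edge_eq w (D.emb b e.1)
    rw [show blockMult D.n D.shape D.emb (D.emb b e.1) w = D.mult (D.emb b e.1) w from rfl,
        show blockMult D.n D.shape D.emb w (D.emb b e.1) = D.mult w (D.emb b e.1) from rfl] at e1 e2
    omega
  · have m1 : 0 < D.mult (D.emb b z) (D.emb b e.1) :=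
      mult_pos D (b := b) (e := (z, e.1)) (bperm.mem_iff.mpr (by simp)) rfl rfl
    have m2 : D.mult (D.emb b e.1) (D.emb b z) = 0 := by
      apply mult_eq_zero
      intro d g hg h1 h2
      rcases onlyTwo D hbc hf2.symm h1.symm with rfl | rfl
      · have g1 : g.1 = e.1 := D.emb_inj b h1
        have g2 : g.2 = z := D.emb_inj b h2
        have hg' := bperm.mem_iff.mp hg
        rw [show g = (e.1, z) from Prod.ext g1 g2] at hg'
        simp only [List.mem_cons, List.not_mem_nil, or_false, Prod.mk.injEq] at hg'
        rcases hg' with ⟨_, h'⟩ | ⟨h', _⟩ | ⟨h', _⟩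
        · exact bz2 h'
        · exact bne h'
        · exact bz1 h'.symm
      · rcases call g.2 with h | h | h
        · rw [h] at h2; exact hzy (hf1.symm.trans h2).symm
        · rw [h] at h2; exact hzx (hf2.symm.trans h2).symm
        · rw [h] at h2; exact hzu h2.symm
    have A1 : Adj G (D.emb b z) (D.emb b e.1) := adj_of_oneside D m1 m2
    have m3 : 0 < D.mult (D.emb b e.2) (D.emb b z) :=
      mult_pos D (b := b) (e := (e.2, z)) (bperm.mem_iff.mpr (by simp)) rfl rfl
    have m4 : D.mult (D.emb b z) (D.emb b e.2) = 0 := by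
      apply mult_eq_zero
      intro d g hg h1 h2
      rcases onlyTwo D hbc hf1.symm h2.symm with rfl | rfl
      · have g1 : g.1 = z := D.emb_inj b h1
        have g2 : g.2 = e.2 := D.emb_inj b h2
        have hg' := bperm.mem_iff.mp hg
        rw [show g = (z, e.2) from Prod.ext g1 g2] at hg'
        simp only [List.mem_cons, List.not_mem_nil, or_false, Prod.mk.injEq] at hg'
        rcases hg' with ⟨h', _⟩ | ⟨h', _⟩ | ⟨_, h'⟩
        · exact bz1 h'
        · exact bz2 h'
        · exact bne h'.symm
      · rcases call g.1 with h | h | h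
        · rw [h] at h1; exact hzy (hf1.symm.trans h1).symm
        · rw [h] at h1; exact hzx (hf2.symm.trans h1).symm
        · rw [h] at h1; exact hzu h1.symm
    have A2 : Adj G (D.emb b e.2) (D.emb b z) := adj_of_oneside D m3 m4
    exact reach_trans (adj_reach (adj_symm A1)) (reach_symm (adj_reach A2))

lemma cross (hiso : ∀ v : V, degree G v ≠ 0) {b : Fin D.n}
    {e : Fin (D.shape b).numNodes × Fin (D.shape b).numNodes}
    (he : e ∈ (D.shape b).edges) : Reach G (D.emb b e.1) (D.emb b e.2) := by
  by_cases hm : D.mult (D.emb b e.2) (D.emb b e.1) = 0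
  · exact adj_reach (adj_of_oneside D (mult_pos D he rfl rfl) hm)
  · obtain ⟨c, f, hf, hf1, hf2⟩ := exists_of_mult_pos D (Nat.pos_of_ne_zero hm)
    have hcb : c ≠ b := by
      rintro rfl
      have h1 : f.1 = e.2 := D.emb_inj c hf1
      have h2 : f.2 = e.1 := D.emb_inj c hf2
      rw [show f = (e.2, e.1) from Prod.ext h1 h2] at hf
      exact no_rev _ e.1 e.2 (by rwa [Prod.mk.eta]) hf
    have hbc : b ≠ c := hcb.symm
    have ob2 := D.glue_outlets c b f.1 e.2 hf1 hcb
    have ob1 := D.glue_outlets c b f.2 e.1 hf2 hcb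
    have hfe : (f.1, f.2) ∈ (D.shape c).edges := by rwa [Prod.mk.eta]
    have hee : (e.1, e.2) ∈ (D.shape b).edges := by rwa [Prod.mk.eta]
    rcases outlet_edge_cases _ _ _ hee ob1.2 ob2.2 with hsb | hsb | hsb
    · rcases outlet_edge_cases _ _ _ hfe ob2.1 ob1.1 with hsc | hsc | hsc
      · exact (case_ss D hiso hbc he hf hf1 hf2 hsb hsc).elim
      · exact case_st D hbc he hf hf1 hf2 hsb hsc
      · have hd := diamond_edge _ hsc f.1 f.2 hfe ob2.1 ob1.1
        have hr := diamond_reach D hsc f.1 f.2 hd.1 hd.2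
        rw [hf1, hf2] at hr
        exact reach_symm hr
    · rcases outlet_edge_cases _ _ _ hfe ob2.1 ob1.1 with hsc | hsc | hsc
      · have hr := case_st D (b := c) (c := b) (e := f) (f := e) hcb hf he
          hf2.symm hf1.symm hsc hsb
        rw [hf1, hf2] at hr
        exact reach_symm hr
      · exact case_tt D hiso hbc he hf hf1 hf2 hsb hsc
      · have hd := diamond_edge _ hsc f.1 f.2 hfe ob2.1 ob1.1
        have hr := diamond_reach D hsc f.1 f.2 hd.1 hd.2
        rw [hf1, hf2] at hr
        exact reach_symm hr
    · have hd := diamond_edge _ hsb e.1 e.2 hee ob1.2 ob2.2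
      exact diamond_reach D hsb e.1 e.2 hd.1 hd.2

lemma block_reach (hiso : ∀ v : V, degree G v ≠ 0) (b : Fin D.n)
    (i j : Fin (D.shape b).numNodes) : Reach G (D.emb b i) (D.emb b j) :=
  shape_conn (D.shape b) (fun p q => Reach G (D.emb b p) (D.emb b q))
    (fun _ => Relation.ReflTransGen.refl) (fun _ _ h => reach_symm h)
    (fun _ _ _ h1 h2 => reach_trans h1 h2)
    (fun p q h => cross D hiso (e := (p, q)) h) i j

end BDAux

namespace BDAux

open BlockShape

variable {V : Type} [Fintype V] [DecidableEq V] {G : V → V → ℕ}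

lemma emb_cast (D : BlockDecomposition G) {b b' : Fin D.n} (h : b = b')
    (i : Fin (D.shape b).numNodes) (i' : Fin (D.shape b').numNodes) (hv : (i : ℕ) = (i' : ℕ)) :
    D.emb b i = D.emb b' i' := by subst h; rw [Fin.ext hv]

lemma forward (hiso : ∀ v : V, degree G v ≠ 0) (D : BlockDecomposition G) (v : V) :
    Decomposable (fun x y : {w : V // w ∈ component G v} => G x.1 y.1) := by
  classical
  set P : Fin D.n → Prop := fun b => Reach G v (D.emb b ⟨0, numNodes_pos _⟩) with hP
  set eqv : Fin (Fintype.card {b : Fin D.n // P b}) ≃ {b : Fin D.n // P b} :=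
    (Fintype.equivFin {b : Fin D.n // P b}).symm with heqv
  have hmem : ∀ (k : Fin (Fintype.card {b : Fin D.n // P b}))
      (i : Fin (D.shape (eqv k).1).numNodes),
      D.emb (eqv k).1 i ∈ component G v := fun k i =>
    mem_component_iff.mpr
      (reach_trans (eqv k).2 (block_reach D hiso (eqv k).1 ⟨0, numNodes_pos _⟩ i))
  refine ⟨⟨Fintype.card {b : Fin D.n // P b}, fun k => D.shape (eqv k).1,
    fun k i => ⟨D.emb (eqv k).1 i, hmem k i⟩, ?_, ?_, ?_, ?_, ?_⟩⟩
  · intro k a a' h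
    exact D.emb_inj _ (congrArg Subtype.val h)
  · intro k k' i j h hkk
    refine D.glue_outlets _ _ i j (congrArg Subtype.val h) ?_
    intro hbe
    exact hkk (eqv.injective (Subtype.ext hbe))
  · intro k k' k'' i j l h1 h2
    rcases D.atMostTwo (eqv k).1 (eqv k').1 (eqv k'').1 i j l
      (congrArg Subtype.val h1) (congrArg Subtype.val h2) with h | h | h
    · exact Or.inl (eqv.injective (Subtype.ext h))
    · exact Or.inr (Or.inl (eqv.injective (Subtype.ext h)))
    · exact Or.inr (Or.inr (eqv.injective (Subtype.ext h)))
  · rintro ⟨w, hw⟩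
    obtain ⟨b, i, hbi⟩ := D.covers w
    have hPb : P b := by
      have h1 : Reach G v (D.emb b i) := by
        rw [hbi]; exact mem_component_iff.mp hw
      exact reach_trans h1 (block_reach D hiso b i ⟨0, numNodes_pos _⟩)
    have hβ : (eqv (eqv.symm ⟨b, hPb⟩)).1 = b := congrArg Subtype.val (eqv.apply_symm_apply _)
    exact ⟨eqv.symm ⟨b, hPb⟩, ⟨i.1, by
        show (i:ℕ) < (D.shape (eqv (eqv.symm ⟨b, hPb⟩)).1).numNodes
        rw [hβ]; exact i.isLt⟩,
      Subtype.ext ((emb_cast D hβ _ i rfl).trans hbi)⟩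
  · intro x y
    have key : ∀ x y : {w : V // w ∈ component G v},
        blockMult (Fintype.card {b : Fin D.n // P b}) (fun k => D.shape (eqv k).1)
          (fun k i => (⟨D.emb (eqv k).1 i, hmem k i⟩ : {w : V // w ∈ component G v})) x y
        = D.mult x.1 y.1 := by
      intro x y
      have h2 : blockMult (Fintype.card {b : Fin D.n // P b}) (fun k => D.shape (eqv k).1)
          (fun k i => (⟨D.emb (eqv k).1 i, hmem k i⟩ : {w : V // w ∈ component G v})) x y
          = ∑ a : {b : Fin D.n // P b}, ((D.shape a.1).edges.countP
              fun e => decide (D.emb a.1 e.1 = x.1 ∧ D.emb a.1 e.2 = y.1)) := by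
        refine Fintype.sum_equiv eqv _ _ (fun k => ?_)
        apply List.countP_congr
        intro g _
        simp [Subtype.ext_iff]
      rw [h2, mult_def]
      rw [← Finset.sum_subtype (Finset.univ.filter P)
        (fun b => by simp) (fun b => ((D.shape b).edges.countP
          fun e => decide (D.emb b e.1 = x.1 ∧ D.emb b e.2 = y.1)))]
      apply Finset.sum_filter_of_ne
      intro b _ hb
      obtain ⟨g, hg, hp⟩ := List.countP_pos_iff.mp (Nat.pos_of_ne_zero hb)
      simp only [decide_eq_true_eq] at hp
      have h1 : Reach G v (D.emb b g.1) := by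
        rw [hp.1]; exact mem_component_iff.mp x.2
      exact reach_trans h1 (block_reach D hiso b g.1 ⟨0, numNodes_pos _⟩)
    show G x.1 y.1 = _
    rw [key x y, key y x]
    exact D.edge_eq x.1 y.1

end BDAux

namespace BDAux

open BlockShape

variable {V : Type} [Fintype V] [DecidableEq V] {G : V → V → ℕ}

lemma backward
    (h : ∀ v : V, Decomposable (fun x y : {w : V // w ∈ component G v} => G x.1 y.1)) :
    Decomposable G := by
  classical
  let st : Setoid V := ⟨fun a b => Reach G a b,
    ⟨fun _ => Relation.ReflTransGen.refl, fun hx => reach_symm hx,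
      fun h1 h2 => reach_trans h1 h2⟩⟩
  letI : DecidableEq (Quotient st) := Classical.decEq _
  haveI : Finite (Quotient st) := Quotient.finite st
  letI : Fintype (Quotient st) := Fintype.ofFinite _
  let Dq : ∀ q : Quotient st,
      BlockDecomposition (fun x y : {w : V // w ∈ component G q.out} => G x.1 y.1) :=
    fun q => (h q.out).some
  let I := Σ q : Quotient st, Fin (Dq q).n
  let e : Fin (Fintype.card I) ≃ I := (Fintype.equivFin I).symm
  have hout : ∀ w : V, Reach G (Quotient.mk st w).out w := fun w => Quotient.mk_out w
  have hcls : ∀ (q : Quotient st) (w : V), Reach G q.out w → Quotient.mk st w = q :=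
    fun q w hw => (Quotient.sound (reach_symm hw)).trans q.out_eq
  have hmemc : ∀ (q : Quotient st) (w : {w : V // w ∈ component G q.out}),
      Reach G q.out w.1 := fun q w => mem_component_iff.mp w.2
  have embc : ∀ (p p' : I) (hpp : p = p') (i : Fin ((Dq p.1).shape p.2).numNodes)
      (i' : Fin ((Dq p'.1).shape p'.2).numNodes), (i : ℕ) = (i' : ℕ) →
      ((Dq p.1).emb p.2 i).1 = ((Dq p'.1).emb p'.2 i').1 := by
    rintro p p' rfl i i' hv
    rw [Fin.ext hv]
  refine ⟨⟨Fintype.card I, fun k => (Dq (e k).1).shape (e k).2,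
    fun k i => ((Dq (e k).1).emb (e k).2 i).1, ?_, ?_, ?_, ?_, ?_⟩⟩
  · intro k a a' hh
    exact (Dq (e k).1).emb_inj _ (Subtype.ext hh)
  · have G1 : ∀ (p p' : I) (i : Fin ((Dq p.1).shape p.2).numNodes)
        (j : Fin ((Dq p'.1).shape p'.2).numNodes),
        ((Dq p.1).emb p.2 i).1 = ((Dq p'.1).emb p'.2 j).1 → p ≠ p' →
        ((Dq p.1).shape p.2).IsOutlet i ∧ ((Dq p'.1).shape p'.2).IsOutlet j := by
      rintro ⟨q, b⟩ ⟨q', b'⟩ i j hv hne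
      have hq : q = q' := by
        have h1 := hcls q _ (hmemc q ((Dq q).emb b i))
        have h2 := hcls q' _ (hmemc q' ((Dq q').emb b' j))
        rw [← h1, ← h2, hv]
      subst hq
      have hbb : b ≠ b' := fun hb => hne (by rw [hb])
      exact (Dq q).glue_outlets b b' i j (Subtype.ext hv) hbb
    intro k k' i j hv hkk
    exact G1 (e k) (e k') i j hv (fun hp => hkk (e.injective hp))
  · have G2 : ∀ (p p' p'' : I) (i : Fin ((Dq p.1).shape p.2).numNodes)
        (j : Fin ((Dq p'.1).shape p'.2).numNodes)
        (l : Fin ((Dq p''.1).shape p''.2).numNodes),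
        ((Dq p.1).emb p.2 i).1 = ((Dq p'.1).emb p'.2 j).1 →
        ((Dq p.1).emb p.2 i).1 = ((Dq p''.1).emb p''.2 l).1 →
        p = p' ∨ p = p'' ∨ p' = p'' := by
      rintro ⟨q, b⟩ ⟨q', b'⟩ ⟨q'', b''⟩ i j l h1 h2
      have hq1 : q = q' := by
        have e1 := hcls q _ (hmemc q ((Dq q).emb b i))
        have e2 := hcls q' _ (hmemc q' ((Dq q').emb b' j))
        rw [← e1, ← e2, h1]
      have hq2 : q = q'' := by
        have e1 := hcls q _ (hmemc q ((Dq q).emb b i))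
        have e2 := hcls q'' _ (hmemc q'' ((Dq q'').emb b'' l))
        rw [← e1, ← e2, h2]
      subst hq1
      subst hq2
      rcases (Dq q).atMostTwo b b' b'' i j l (Subtype.ext h1) (Subtype.ext h2)
        with hh | hh | hh
      · exact Or.inl (by rw [hh])
      · exact Or.inr (Or.inl (by rw [hh]))
      · exact Or.inr (Or.inr (by rw [hh]))
    intro k k' k'' i j l h1 h2
    rcases G2 (e k) (e k') (e k'') i j l h1 h2 with hh | hh | hh
    · exact Or.inl (e.injective hh)
    · exact Or.inr (Or.inl (e.injective hh))
    · exact Or.inr (Or.inr (e.injective hh))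
  · intro w
    have hw : w ∈ component G (Quotient.mk st w).out := mem_component_iff.mpr (hout w)
    obtain ⟨b, i, hbi⟩ := (Dq (Quotient.mk st w)).covers ⟨w, hw⟩
    have hsur := e.apply_symm_apply (⟨Quotient.mk st w, b⟩ : I)
    refine ⟨e.symm ⟨Quotient.mk st w, b⟩, ⟨i.1, ?_⟩, ?_⟩
    · show (i : ℕ) < ((Dq (e (e.symm ⟨Quotient.mk st w, b⟩)).1).shape
        (e (e.symm ⟨Quotient.mk st w, b⟩)).2).numNodes
      rw [hsur]
      exact i.isLt
    · exact (embc _ _ hsur _ i rfl).trans (congrArg Subtype.val hbi)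
  · intro x y
    by_cases hxy : Quotient.mk st x = Quotient.mk st y
    · have hx : x ∈ component G (Quotient.mk st x).out := mem_component_iff.mpr (hout x)
      have hy : y ∈ component G (Quotient.mk st x).out := mem_component_iff.mpr (by
        rw [hxy]; exact hout y)
      have hBM : ∀ (x y : V) (q : Quotient st) (hx : x ∈ component G q.out)
          (hy : y ∈ component G q.out),
          blockMult (Fintype.card I) (fun k => (Dq (e k).1).shape (e k).2)
            (fun k i => ((Dq (e k).1).emb (e k).2 i).1) x y
          = (Dq q).mult ⟨x, hx⟩ ⟨y, hy⟩ := by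
        intro x y q hx hy
        have step1 : blockMult (Fintype.card I) (fun k => (Dq (e k).1).shape (e k).2)
            (fun k i => ((Dq (e k).1).emb (e k).2 i).1) x y
            = ∑ p : I, ((Dq p.1).shape p.2).edges.countP
                fun g => decide (((Dq p.1).emb p.2 g.1).1 = x ∧ ((Dq p.1).emb p.2 g.2).1 = y) :=
          Fintype.sum_equiv e _ _ (fun k => rfl)
        rw [step1, ← Finset.univ_sigma_univ, Finset.sum_sigma]
        rw [Finset.sum_eq_single q]
        · rw [mult_def]
          apply Finset.sum_congr rfl
          intro b _
          apply List.countP_congr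
          intro g _
          simp [Subtype.ext_iff]
        · intro q' _ hq'
          apply Finset.sum_eq_zero
          intro b _
          apply List.countP_eq_zero.mpr
          intro g hg hp
          simp only [decide_eq_true_eq] at hp
          apply hq'
          have e1 : Quotient.mk st x = q' := hcls q' x (by
            rw [← hp.1]; exact hmemc q' _)
          have e2 : Quotient.mk st x = q := hcls q x (mem_component_iff.mp hx)
          rw [← e1, e2]
        · intro hq
          exact absurd (Finset.mem_univ q) hq
      have hGr := (Dq (Quotient.mk st x)).edge_eq ⟨x, hx⟩ ⟨y, hy⟩
      rw [hBM x y _ hx hy, hBM y x _ hy hx]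
      exact hGr
    · have hm1 : blockMult (Fintype.card I) (fun k => (Dq (e k).1).shape (e k).2)
          (fun k i => ((Dq (e k).1).emb (e k).2 i).1) x y = 0 := by
        apply Finset.sum_eq_zero
        intro k _
        apply List.countP_eq_zero.mpr
        intro g hg hp
        simp only [decide_eq_true_eq] at hp
        have e1 : Quotient.mk st x = (e k).1 := hcls _ x (by
          rw [← hp.1]; exact hmemc _ _)
        have e2 : Quotient.mk st y = (e k).1 := hcls _ y (by
          rw [← hp.2]; exact hmemc _ _)
        exact hxy (e1.trans e2.symm)
      have hm2 : blockMult (Fintype.card I) (fun k => (Dq (e k).1).shape (e k).2)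
          (fun k i => ((Dq (e k).1).emb (e k).2 i).1) y x = 0 := by
        apply Finset.sum_eq_zero
        intro k _
        apply List.countP_eq_zero.mpr
        intro g hg hp
        simp only [decide_eq_true_eq] at hp
        have e1 : Quotient.mk st y = (e k).1 := hcls _ y (by
          rw [← hp.1]; exact hmemc _ _)
        have e2 : Quotient.mk st x = (e k).1 := hcls _ x (by
          rw [← hp.2]; exact hmemc _ _)
        exact hxy (e2.trans e1.symm)
      have hA : G x y + G y x = 0 := by
        by_contra hc
        exact hxy (Quotient.sound (adj_reach (Nat.pos_of_ne_zero hc)))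
      rw [hm1, hm2]
      omega

end BDAux

/-- A finite directed graph without loops, 2-cycles or isolated nodes
is block-decomposable iff every connected component is block-decomposable. -/
theorem stmt_0 {V : Type} [Fintype V] [DecidableEq V] (G : V → V → ℕ)
    (hG : IsDiGraph G) (hiso : ∀ v : V, degree G v ≠ 0) :
    Decomposable G ↔
      ∀ v : V, Decomposable (fun x y : {w : V // w ∈ component G v} => G x.1 y.1) := by
  constructor
  · rintro ⟨D⟩ v
    exact BDAux.forward hiso D v
  · intro h
    exact BDAux.backward h
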